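/- Any weakly nilpotent cellular automaton on A^ℤ is nilpotent: if every configuration x satisfies F^t(x) = z for all sufficiently large t (for a fixed configuration z), then there exists q such that F^q(A^ℤ) = {z}. -/

import Mathlib

/-- A continuous function from `A^ℤ` (A finite discrete) to `A` depends on finitely
many coordinates. -/
theorem stmt4_loc {A : Type*} [Fintype A] [TopologicalSpace A] [DiscreteTopology A]
    (f : (ℤ → A) → A) (hf : Continuous f) :
    ∃ R : Finset ℤ, ∀ u v : ℤ → A, (∀ i ∈ R, u i = v i) → f u = f v := by
  classical
  have hopen : ∀ w : ℤ → A, ∃ S : Finset ℤ, ∀ v, (∀ i ∈ S, v i = w i) → f v = f w := by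
    intro w
    have ho : IsOpen (f ⁻¹' {f w}) := (isOpen_discrete _).preimage hf
    obtain ⟨I, u, h1, h2⟩ := (isOpen_pi_iff.mp ho) w rfl
    refine ⟨I, fun v hv => h2 (fun i hi => ?_)⟩
    rw [hv i hi]; exact (h1 i hi).2
  choose S hS using hopen
  have hUopen : ∀ w : ℤ → A, IsOpen ((↑(S w) : Set ℤ).pi (fun i => {w i})) :=
    fun w => isOpen_set_pi (S w).finite_toSet (fun i _ => isOpen_discrete _)
  have hcov : Set.univ ⊆ ⋃ w : ℤ → A, (↑(S w) : Set ℤ).pi (fun i => {w i}) := by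
    intro v _
    exact Set.mem_iUnion.mpr ⟨v, fun i _ => rfl⟩
  obtain ⟨t, ht⟩ := isCompact_univ.elim_finite_subcover _ hUopen hcov
  refine ⟨t.biUnion S, fun u v huv => ?_⟩
  obtain ⟨w, hwt, hw⟩ : ∃ w ∈ t, u ∈ ((↑(S w) : Set ℤ)).pi (fun i => {w i}) := by
    have := ht (Set.mem_univ u); simpa using this
  have hu : ∀ i ∈ S w, u i = w i := fun i hi => hw i hi
  have hv : ∀ i ∈ S w, v i = w i := by
    intro i hi
    rw [← huv i (Finset.mem_biUnion.mpr ⟨w, hwt, hi⟩)]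
    exact hu i hi
  rw [hS w u hu, hS w v hv]

/-- Any weakly nilpotent cellular automaton on `A^ℤ` is nilpotent. -/
theorem stmt4 {A : Type*} [Fintype A] [Nonempty A] [TopologicalSpace A] [DiscreteTopology A]
    (F : (ℤ → A) → (ℤ → A)) (hF : Continuous F)
    (hcomm : ∀ x : ℤ → A, F (fun i => x (i + 1)) = fun i => F x (i + 1))
    (z : ℤ → A) (h : ∀ x : ℤ → A, ∃ q : ℕ, ∀ t ≥ q, F^[t] x = z) :
    ∃ q : ℕ, F^[q] '' Set.univ = {z} := by
  classical
  -- F commutes with all powers of the shift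
  have hshift : ∀ (k : ℤ) (x : ℤ → A), F (fun i => x (i + k)) = fun i => F x (i + k) := by
    intro k
    induction k using Int.induction_on with
    | zero => intro x; simp
    | succ k ih =>
      intro x
      have e1 : (fun i : ℤ => x (i + ((k : ℤ) + 1))) =
          (fun i : ℤ => (fun j : ℤ => x (j + (k : ℤ))) (i + 1)) := by
        funext i; show x (i + ((k:ℤ)+1)) = x (i + 1 + (k:ℤ)); congr 1; ring
      calc F (fun i => x (i + ((k : ℤ) + 1)))
          = F (fun i => (fun j : ℤ => x (j + (k : ℤ))) (i + 1)) := by rw [e1]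
        _ = fun i => F (fun j : ℤ => x (j + (k : ℤ))) (i + 1) := hcomm (fun j : ℤ => x (j + (k : ℤ)))
        _ = fun i => (fun j : ℤ => F x (j + (k : ℤ))) (i + 1) := by rw [ih x]
        _ = fun i => F x (i + ((k : ℤ) + 1)) := by
            funext i; show F x (i + 1 + (k:ℤ)) = F x (i + ((k:ℤ)+1)); congr 1; ring
    | pred k ih =>
      intro x
      have key := hcomm (fun j : ℤ => x (j + (-(k : ℤ) - 1)))
      have e1 : (fun i : ℤ => (fun j : ℤ => x (j + (-(k : ℤ) - 1))) (i + 1)) =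
          (fun i : ℤ => x (i + -(k : ℤ))) := by
        funext i; show x (i + 1 + (-(k:ℤ) - 1)) = x (i + -(k:ℤ)); congr 1; ring
      rw [e1] at key
      have key2 : ∀ i : ℤ, F x (i + -(k : ℤ)) =
          F (fun j : ℤ => x (j + (-(k : ℤ) - 1))) (i + 1) :=
        fun i => congrFun ((ih x).symm.trans key) i
      funext m
      have hm := key2 (m - 1)
      have e : m - 1 + 1 = m := by ring
      rw [e] at hm
      rw [← hm]
      congr 1
      ring
  have hshiftIter : ∀ (t : ℕ) (k : ℤ) (x : ℤ → A),
      F^[t] (fun i => x (i + k)) = fun i => F^[t] x (i + k) := by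
    intro t
    induction t with
    | zero => intro k x; simp
    | succ t ih =>
      intro k x
      rw [Function.iterate_succ_apply', Function.iterate_succ_apply', ih k x, hshift k (F^[t] x)]
  -- z is constant
  have hzconst : ∀ j : ℤ, z j = z 0 := by
    have hzs : (fun i : ℤ => z (i + 1)) = z := by
      obtain ⟨qz, hqz⟩ := h z
      obtain ⟨qs, hqs⟩ := h (fun i : ℤ => z (i + 1))
      have h1 : F^[max qz qs] (fun i : ℤ => z (i + 1)) = z := hqs _ (le_max_right _ _)
      rw [hshiftIter (max qz qs) 1 z, hqz _ (le_max_left _ _)] at h1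
      exact h1
    have step : ∀ i : ℤ, z (i + 1) = z i := fun i => congrFun hzs i
    intro j
    induction j using Int.induction_on with
    | zero => rfl
    | succ k ih => rw [step k, ih]
    | pred k ih => rw [← ih, ← step (-(k:ℤ) - 1)]; congr 1; ring
  -- Baire: some closed set C q = {x | F^[q] x = z} has nonempty interior
  have hclosed : ∀ q : ℕ, IsClosed {x : ℤ → A | F^[q] x = z} := by
    intro q
    have : {x : ℤ → A | F^[q] x = z} = F^[q] ⁻¹' {z} := rfl
    rw [this]
    exact isClosed_singleton.preimage (hF.iterate q)
  have hcover : ⋃ q : ℕ, {x : ℤ → A | F^[q] x = z} = Set.univ := by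
    ext x
    simp only [Set.mem_iUnion, Set.mem_setOf_eq, Set.mem_univ, iff_true]
    obtain ⟨q, hq⟩ := h x
    exact ⟨q, hq q le_rfl⟩
  obtain ⟨q, hq⟩ := nonempty_interior_of_iUnion_of_closed hclosed hcover
  obtain ⟨x, hx⟩ := hq
  obtain ⟨I, u, h1, h2⟩ := (isOpen_pi_iff.mp isOpen_interior) x hx
  have hcyl : ∀ y : ℤ → A, (∀ i ∈ I, y i = x i) → F^[q] y = z := by
    intro y hy
    have hmem : y ∈ (↑I : Set ℤ).pi u := by
      intro i hi
      rw [hy i hi]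
      exact (h1 i hi).2
    have h3 : y ∈ {x : ℤ → A | F^[q] x = z} := interior_subset (h2 hmem)
    exact h3
  -- shifted cylinders also map to z
  have hcylk : ∀ (k : ℤ) (y : ℤ → A), (∀ i ∈ I, y (i + k) = x i) → F^[q] y = z := by
    intro k y hy
    have h1' : F^[q] (fun i => y (i + k)) = z := hcyl _ hy
    rw [hshiftIter q k y] at h1'
    funext m
    have hm := congrFun h1' (m - k)
    have e : m - k + k = m := by ring
    rw [e] at hm
    rw [hm, hzconst (m - k), hzconst m]
  -- locality of w ↦ F^[q] w 0
  obtain ⟨R, hR⟩ := stmt4_loc (fun w : ℤ → A => F^[q] w 0)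
    ((continuous_apply (0 : ℤ)).comp (hF.iterate q))
  -- choose a shift k putting the cylinder window away from R
  obtain ⟨k, hk⟩ := Infinite.exists_notMem_finset (Finset.image₂ (fun r i => r - i) R I)
  -- every configuration maps to z at coordinate 0
  have main : ∀ v : ℤ → A, F^[q] v 0 = z 0 := by
    intro v
    have hyI : ∀ i ∈ I, (fun m => if m - k ∈ I then x (m - k) else v m) (i + k) = x i := by
      intro i hi
      show (if i + k - k ∈ I then x (i + k - k) else v (i + k)) = x i
      have e : i + k - k = i := by ring
      rw [e, if_pos hi]
    have hyq : F^[q] (fun m => if m - k ∈ I then x (m - k) else v m) = z := hcylk k _ hyI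
    have hagree : ∀ r ∈ R, (fun m => if m - k ∈ I then x (m - k) else v m) r = v r := by
      intro r hr
      show (if r - k ∈ I then x (r - k) else v r) = v r
      rw [if_neg]
      intro hrI
      apply hk
      exact Finset.mem_image₂.mpr ⟨r, hr, r - k, hrI, by ring⟩
    have hfeq := hR _ v hagree
    rw [← hfeq, hyq]
  -- hence F^[q] w = z for all w
  have hall : ∀ w : ℤ → A, F^[q] w = z := by
    intro w
    funext j
    have h1' := main (fun i => w (i + j))
    have h2' := (congrFun (hshiftIter q j w) 0).symm.trans h1'
    have e : (0 : ℤ) + j = j := by ring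
    rw [e] at h2'
    rw [h2', hzconst j]
  refine ⟨q, Set.eq_singleton_iff_unique_mem.mpr ⟨⟨z, Set.mem_univ z, hall z⟩, ?_⟩⟩
  rintro w ⟨y, -, rfl⟩
  exact hall y
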